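/- Let n, a, d, i ∈ ℕ with a ≤ n, i ≤ a, d + i ≤ n − a, and d + 2i < n. Then ( (n−a−d)^{\underline{i}} · a^{\underline{i}} ) / (n−d)^{\underline{2i}} ≤ ( (n−a)^i · n^i ) / (n−d−2i)^{2i}, where b^{\underline{c}} := b·(b−1)···(b−c+1) denotes the falling factorial. -/

import Mathlib

/-- For `a ≤ n`, `i ≤ a`, `d + i ≤ n − a` and `d + 2i < n`:
`((n−a−d)^{i̲} · a^{i̲}) / (n−d)^{2i̲} ≤ ((n−a)^i · n^i) / (n−d−2i)^{2i}`,
where `b^{c̲}` is the falling factorial (`Nat.descFactorial`). -/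
theorem descFactorial_ratio_le (n a d i : ℕ) (ha : a ≤ n) (hi : i ≤ a)
    (hdi : d + i ≤ n - a) (h2i : d + 2 * i < n) :
    (((n - a - d).descFactorial i : ℝ) * (a.descFactorial i : ℝ)) /
        ((n - d).descFactorial (2 * i) : ℝ) ≤
      (((n : ℝ) - a) ^ i * (n : ℝ) ^ i) / ((n : ℝ) - d - 2 * i) ^ (2 * i) := by
  have hd2n : d + 2 * i ≤ n := h2i.le
  have hcast1 : ((n : ℝ) - a) = ((n - a : ℕ) : ℝ) := by
    rw [Nat.cast_sub ha]
  have hcast2 : ((n : ℝ) - d - 2 * i) = ((n - d - 2 * i : ℕ) : ℝ) := by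
    have h1 : d ≤ n := le_trans (Nat.le_add_right _ _) hd2n
    have h2 : 2 * i ≤ n - d := Nat.le_sub_of_add_le (by omega)
    rw [Nat.cast_sub h2, Nat.cast_sub h1]
    push_cast; ring
  rw [hcast1, hcast2]
  -- numerator bound in ℕ
  have hnum : (n - a - d).descFactorial i * a.descFactorial i ≤ (n - a) ^ i * n ^ i :=
    Nat.mul_le_mul
      (le_trans (Nat.descFactorial_le_pow _ _)
        (Nat.pow_le_pow_left (Nat.sub_le _ _) _))
      (le_trans (Nat.descFactorial_le_pow _ _) (Nat.pow_le_pow_left ha _))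
  -- denominator bound in ℕ
  have hden : (n - d - 2 * i) ^ (2 * i) ≤ (n - d).descFactorial (2 * i) :=
    le_trans (Nat.pow_le_pow_left (by omega) _) (Nat.pow_sub_le_descFactorial (n - d) (2 * i))
  have hdenpos : 0 < (n - d - 2 * i) ^ (2 * i) :=
    Nat.pow_pos (by omega)
  rw [div_le_div_iff₀ (by exact_mod_cast lt_of_lt_of_le hdenpos hden) (by exact_mod_cast hdenpos)]
  exact_mod_cast Nat.mul_le_mul hnum hden
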